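/- Let [a],[c] be S_k-orbits in (ZMod N)^k and let [b] be the orbit of the element (1^m, 0^{k-m}) (m coordinates equal to 1 and k−m equal to 0), with m ≤ k. If the set T([a],[b],[c]) = {(x,y,z) ∈ [a]×[b]×[c] : x+y=z} is nonempty, then S_k acts transitively on the subset of T([a],[b],[c]) consisting of triples whose first coordinate is a fixed representative â ∈ [a]; equivalently, the number M of S_k-orbits of T([a],[b],[c]) equals 1. -/

import Mathlib

namespace Orbits

/-- Coordinate-permutation action: `(σ • x) i = x (σ⁻¹ i)`. -/
def pact {N k : ℕ} (σ : Equiv.Perm (Fin k)) (x : Fin k → ZMod N) : Fin k → ZMod N :=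
  fun i => x (σ⁻¹ i)

/-- `x` and `y` lie in the same `S_k`-orbit. -/
def SameOrbit {N k : ℕ} (x y : Fin k → ZMod N) : Prop :=
  ∃ σ : Equiv.Perm (Fin k), pact σ x = y

/-- The `S_k`-orbit of `x`. -/
def orbit {N k : ℕ} (x : Fin k → ZMod N) : Set (Fin k → ZMod N) :=
  {y | SameOrbit x y}

abbrev Triple (N k : ℕ) := (Fin k → ZMod N) × (Fin k → ZMod N) × (Fin k → ZMod N)

/-- `T(A,B,C) = {(x,y,z) ∈ A×B×C | x + y = z}`. -/
def T {N k : ℕ} (A B C : Set (Fin k → ZMod N)) : Set (Triple N k) :=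
  {p | p.1 ∈ A ∧ p.2.1 ∈ B ∧ p.2.2 ∈ C ∧ p.1 + p.2.1 = p.2.2}

/-- Diagonal action on triples. -/
def tact {N k : ℕ} (σ : Equiv.Perm (Fin k)) (p : Triple N k) : Triple N k :=
  (pact σ p.1, pact σ p.2.1, pact σ p.2.2)

/-- The number of `S_k`-orbits of a subset of triples (under the diagonal action). -/
noncomputable def numOrbitsOn {N k : ℕ} (S : Set (Triple N k)) : ℕ :=
  Nat.card (Quot (fun p q : S => ∃ σ : Equiv.Perm (Fin k), tact σ (p : Triple N k) = (q : Triple N k)))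

/-- Weakly decreasing with respect to the `ZMod.val` ordering (standard form). -/
def StdForm {N k : ℕ} (x : Fin k → ZMod N) : Prop :=
  ∀ i i' : Fin k, i ≤ i' → (x i').val ≤ (x i).val

/-- The vector `(1^m, 0^{k-m})`. -/
def oneZero (N k m : ℕ) : Fin k → ZMod N :=
  fun i => if (i : ℕ) < m then 1 else 0

/-- The structure constant `M_{[a],[b]}^{[c]}`. -/
noncomputable def M {N k : ℕ} (a b c : Fin k → ZMod N) : ℕ :=
  numOrbitsOn (T (orbit a) (orbit b) (orbit c))

end Orbits

open Orbits Finset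

namespace Stmt5Aux

variable {N k : ℕ}

/-- Number of coordinates where `x` takes the value `u`. -/
def cnt (x : Fin k → ZMod N) (u : ZMod N) : ℕ :=
  (Finset.univ.filter (fun i => x i = u)).card

lemma cnt_pact (σ : Equiv.Perm (Fin k)) (x : Fin k → ZMod N) (u : ZMod N) :
    cnt (pact σ x) u = cnt x u := by
  unfold cnt pact
  apply Finset.card_bij (fun i _ => σ⁻¹ i)
  · intro i hi; simp at hi ⊢; exact hi
  · intro i _ j _ h; exact (Equiv.injective _) h
  · intro j hj; simp at hj ⊢; exact ⟨σ j, by simpa using hj, by simp⟩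

/-- Joint count: coordinates where `x` is `u` and `y` is `1`. -/
def jcnt (x y : Fin k → ZMod N) (u : ZMod N) : ℕ :=
  (Finset.univ.filter (fun i => x i = u ∧ y i = 1)).card

lemma zero_card (x y : Fin k → ZMod N) (hy : ∀ i, y i = 0 ∨ y i = 1)
    (h01 : (1 : ZMod N) ≠ 0) (u : ZMod N) :
    (univ.filter (fun i => x i = u ∧ y i = 0)).card + jcnt x y u = cnt x u := by
  have h2 : (univ.filter (fun i => x i = u)) =
      (univ.filter (fun i => x i = u ∧ y i = 0)) ∪ (univ.filter (fun i => x i = u ∧ y i = 1)) := by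
    ext i; simp only [mem_filter, mem_union, mem_univ, true_and]
    rcases hy i with h | h <;> rw [h] <;> tauto
  have hd2 : Disjoint (univ.filter (fun i => x i = u ∧ y i = 0))
      (univ.filter (fun i => x i = u ∧ y i = 1)) := by
    rw [Finset.disjoint_left]; intro i hi hj
    simp at hi hj
    exact absurd (hi.2.symm.trans hj.2) (Ne.symm h01)
  unfold cnt jcnt
  rw [h2, Finset.card_union_of_disjoint hd2]

lemma key_rel (x y : Fin k → ZMod N) (hy : ∀ i, y i = 0 ∨ y i = 1)
    (h01 : (1 : ZMod N) ≠ 0) (u : ZMod N) :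
    cnt (x + y) u + jcnt x y u = cnt x u + jcnt x y (u - 1) := by
  have h1 : (univ.filter (fun i => (x + y) i = u)) =
      (univ.filter (fun i => x i = u ∧ ¬ y i = 1)) ∪ (univ.filter (fun i => x i = u - 1 ∧ y i = 1)) := by
    ext i
    simp only [mem_filter, mem_union, mem_univ, true_and, Pi.add_apply]
    rcases hy i with h | h
    · rw [h]; constructor
      · intro hh; left; refine ⟨by simpa using hh, fun hc => h01 hc.symm⟩
      · rintro (⟨h1, _⟩ | ⟨_, h2⟩)
        · simpa using h1
        · exact absurd (h ▸ h2) (Ne.symm h01)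
    · rw [h]; constructor
      · intro hh; right; exact ⟨by rw [eq_sub_iff_add_eq]; exact hh, rfl⟩
      · rintro (⟨_, h2⟩ | ⟨h1, _⟩)
        · exact absurd rfl h2
        · rw [eq_sub_iff_add_eq] at h1; exact h1
  have hd1 : Disjoint (univ.filter (fun i => x i = u ∧ ¬ y i = 1))
      (univ.filter (fun i => x i = u - 1 ∧ y i = 1)) := by
    rw [Finset.disjoint_left]; intro i hi hj
    simp at hi hj; exact hi.2 hj.2
  have h2 : (univ.filter (fun i => x i = u)) =
      (univ.filter (fun i => x i = u ∧ ¬ y i = 1)) ∪ (univ.filter (fun i => x i = u ∧ y i = 1)) := by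
    ext i; simp only [mem_filter, mem_union, mem_univ, true_and]; tauto
  have hd2 : Disjoint (univ.filter (fun i => x i = u ∧ ¬ y i = 1))
      (univ.filter (fun i => x i = u ∧ y i = 1)) := by
    rw [Finset.disjoint_left]; intro i hi hj
    simp at hi hj; exact hi.2 hj.2
  unfold cnt jcnt
  rw [h1, h2, Finset.card_union_of_disjoint hd1, Finset.card_union_of_disjoint hd2]
  ring

lemma sum_jcnt [NeZero N] (x y : Fin k → ZMod N) :
    ∑ u : ZMod N, jcnt x y u = cnt y 1 := by
  unfold cnt jcnt
  rw [Finset.card_eq_sum_card_fiberwise (f := x) (t := univ) (fun i _ => mem_univ _)]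
  apply Finset.sum_congr rfl
  intro u _
  rw [Finset.filter_filter]
  apply Finset.card_bij (fun i _ => i) <;> intro i hi <;> simp at * <;> tauto

lemma Dconst [NeZero N] (D : ZMod N → ℤ) (hstep : ∀ u : ZMod N, D u = D (u - 1))
    (hsum : ∑ u : ZMod N, D u = 0) : ∀ u, D u = 0 := by
  have hstep' : ∀ v : ZMod N, D (v + 1) = D v := by
    intro v; have := hstep (v + 1); simpa using this
  have hnat : ∀ n : ℕ, D (n : ZMod N) = D 0 := by
    intro n; induction n with
    | zero => simp
    | succ n ih => push_cast; rw [hstep']; exact ih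
  have hconst : ∀ u : ZMod N, D u = D 0 := by
    intro u
    have := hnat u.val
    rwa [ZMod.natCast_rightInverse u] at this
  have hsum' : ∑ u : ZMod N, D u = (N : ℤ) * D 0 := by
    rw [Finset.sum_congr rfl (fun u _ => hconst u), Finset.sum_const, Finset.card_univ, ZMod.card]
    simp [mul_comm]
  rw [hsum'] at hsum
  have hD0 : D 0 = 0 := by
    have hN : (N : ℤ) ≠ 0 := by exact_mod_cast (NeZero.ne N)
    exact (mul_eq_zero.mp hsum).resolve_left hN
  intro u; rw [hconst u, hD0]

lemma card_filter_fin_lt {m : ℕ} (hm : m ≤ k) :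
    (Finset.univ.filter (fun i : Fin k => (i : ℕ) < m)).card = m := by
  rw [← Finset.card_range m]
  apply Finset.card_bij (fun (i : Fin k) _ => (i : ℕ))
  · intro i hi; simp at hi ⊢; exact hi
  · intro a _ b _ h; exact Fin.val_injective h
  · intro b hb; simp at hb; exact ⟨⟨b, lt_of_lt_of_le hb hm⟩, by simpa using hb, rfl⟩

lemma exists_comp {α : Type*} [Fintype α] [DecidableEq α] (f g : Fin k → α)
    (h : ∀ v, (univ.filter (fun i => f i = v)).card = (univ.filter fun i => g i = v).card) :
    ∃ σ : Equiv.Perm (Fin k), f ∘ σ = g := by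
  have e : ∀ v, {i // g i = v} ≃ {i // f i = v} := fun v =>
    Fintype.equivOfCardEq (by simp only [Fintype.card_subtype]; exact (h v).symm)
  refine ⟨(Equiv.sigmaFiberEquiv g).symm.trans ((Equiv.sigmaCongrRight e).trans (Equiv.sigmaFiberEquiv f)), ?_⟩
  funext i
  exact (e (g i) ⟨i, rfl⟩).2

lemma main {m : ℕ} (hN : 2 ≤ N) (hm : m ≤ k) (a c : Fin k → ZMod N)
    (p q : Triple N k)
    (hp : p ∈ T (orbit a) (orbit (oneZero N k m)) (orbit c))
    (hq : q ∈ T (orbit a) (orbit (oneZero N k m)) (orbit c)) :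
    ∃ σ : Equiv.Perm (Fin k), tact σ p = q := by
  haveI : NeZero N := ⟨by omega⟩
  haveI : Fact (1 < N) := ⟨hN⟩
  have h01 : (1 : ZMod N) ≠ 0 := one_ne_zero
  obtain ⟨⟨σa, hxa⟩, ⟨σb, hyb⟩, ⟨σc, hzc⟩, hpsum⟩ := hp
  obtain ⟨⟨σa', hxa'⟩, ⟨σb', hyb'⟩, ⟨σc', hzc'⟩, hqsum⟩ := hq
  set x := p.1 with hx; set y := p.2.1 with hy; set z := p.2.2 with hz
  set x' := q.1 with hx'; set y' := q.2.1 with hy'; set z' := q.2.2 with hz'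
  -- values of y are 0 or 1
  have hyval : ∀ i, y i = 0 ∨ y i = 1 := by
    intro i
    rw [← hyb]
    unfold pact oneZero
    by_cases h : ((σb⁻¹ i : Fin k) : ℕ) < m <;> simp [h] <;> omega
  have hyval' : ∀ i, y' i = 0 ∨ y' i = 1 := by
    intro i
    rw [← hyb']
    unfold pact oneZero
    by_cases h : ((σb'⁻¹ i : Fin k) : ℕ) < m <;> simp [h] <;> omega
  -- count equalities across orbits
  have cntx : ∀ u, cnt x u = cnt x' u := by
    intro u; rw [← hxa, ← hxa', cnt_pact, cnt_pact]
  have cntz : ∀ u, cnt z u = cnt z' u := by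
    intro u; rw [← hzc, ← hzc', cnt_pact, cnt_pact]
  have cntb1 : cnt (oneZero N k m : Fin k → ZMod N) 1 = m := by
    unfold cnt oneZero
    have hset : (univ.filter (fun i : Fin k => (if (i : ℕ) < m then (1 : ZMod N) else 0) = 1)) =
        univ.filter (fun i : Fin k => (i : ℕ) < m) := by
      ext i; by_cases h : (i : ℕ) < m <;> simp [h, h01]
    rw [hset, card_filter_fin_lt hm]
  have cnty1 : cnt y 1 = m := by rw [← hyb, cnt_pact]; exact cntb1
  have cnty1' : cnt y' 1 = m := by rw [← hyb', cnt_pact]; exact cntb1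
  -- joint counts agree
  have hJ : ∀ u, jcnt x y u = jcnt x' y' u := by
    set D : ZMod N → ℤ := fun u => (jcnt x y u : ℤ) - jcnt x' y' u with hD
    have hstep : ∀ u, D u = D (u - 1) := by
      intro u
      have e1 := key_rel x y hyval h01 u
      have e2 := key_rel x' y' hyval' h01 u
      rw [hpsum] at e1
      rw [hqsum] at e2
      have c1 := cntx u
      have c2 := cntz u
      simp only [hD]
      omega
    have hsum : ∑ u : ZMod N, D u = 0 := by
      have s1 : ∑ u : ZMod N, jcnt x y u = m := by rw [sum_jcnt, cnty1]
      have s2 : ∑ u : ZMod N, jcnt x' y' u = m := by rw [sum_jcnt, cnty1']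
      simp only [hD]
      rw [Finset.sum_sub_distrib, ← Nat.cast_sum, ← Nat.cast_sum, s1, s2, sub_self]
    intro u
    have := Dconst D hstep hsum u
    simp only [hD] at this
    omega
  -- fiberwise counts of the pair functions agree
  have hfib : ∀ v : ZMod N × ZMod N,
      (univ.filter (fun i => (x i, y i) = v)).card = (univ.filter (fun i => (x' i, y' i) = v)).card := by
    rintro ⟨u, w⟩
    simp only [Prod.mk.injEq]
    by_cases hw1 : w = 1
    · subst hw1
      exact hJ u
    by_cases hw0 : w = 0
    · subst hw0
      have e1 := zero_card x y hyval h01 u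
      have e2 := zero_card x' y' hyval' h01 u
      have := hJ u
      have := cntx u
      omega
    · rw [Finset.filter_false_of_mem, Finset.filter_false_of_mem] <;> simp
      · intro i h1 h2; rcases hyval' i with h | h <;> rw [h2] at h <;> tauto
      · intro i h1 h2; rcases hyval i with h | h <;> rw [h2] at h <;> tauto
  obtain ⟨τ, hτ⟩ := exists_comp (fun i => (x i, y i)) (fun i => (x' i, y' i)) hfib
  refine ⟨τ⁻¹, ?_⟩
  have hpx : pact τ⁻¹ x = x' := by
    funext i
    have := congrFun hτ i
    simpa [pact] using congrArg Prod.fst this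
  have hpy : pact τ⁻¹ y = y' := by
    funext i
    have := congrFun hτ i
    simpa [pact] using congrArg Prod.snd this
  have hpz : pact τ⁻¹ z = z' := by
    rw [← hpsum, ← hqsum]
    funext i
    simp only [pact, Pi.add_apply]
    rw [← hpx, ← hpy]
    rfl
  show (pact τ⁻¹ x, pact τ⁻¹ y, pact τ⁻¹ z) = (x', y', z')
  rw [hpx, hpy, hpz]

end Stmt5Aux

theorem stmt5 (N k m : ℕ) (hN : 2 ≤ N) (hk : 0 < k) (hm : m ≤ k)
    (a c : Fin k → ZMod N)
    (hne : (T (orbit a) (orbit (oneZero N k m)) (orbit c)).Nonempty) :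
    M a (oneZero N k m) c = 1 := by
  obtain ⟨p0, hp0⟩ := hne
  unfold M numOrbitsOn
  rw [Nat.card_eq_one_iff_unique]
  constructor
  · constructor
    intro p q
    induction p using Quot.ind with
    | _ p =>
      induction q using Quot.ind with
      | _ q =>
        exact Quot.sound (Stmt5Aux.main hN hm a c p q p.2 q.2)
  · exact ⟨Quot.mk _ ⟨p0, hp0⟩⟩
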